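/- If $k \in L^1(\mathbb{R}^d)$ satisfies $|k|*|f| \leq Mf$ almost everywhere for all simple functions $f : \mathbb{R}^d \to \mathbb{C}$, then $\|k\|_{L^1(\mathbb{R}^d)} \leq 1$. -/

import Mathlib

open MeasureTheory ENNReal

/-- An axis-parallel cube in `ℝ^d`. -/
def IsCube {d : ℕ} (Q : Set (EuclideanSpace ℝ (Fin d))) : Prop :=
  ∃ (a : Fin d → ℝ) (r : ℝ), 0 < r ∧ Q = {x | ∀ i, x i ∈ Set.Icc (a i) (a i + r)}

/-- Average of (the nonnegative part of) `w` over a set `Q`. -/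
noncomputable def cubeAvg {d : ℕ} (Q : Set (EuclideanSpace ℝ (Fin d)))
    (w : EuclideanSpace ℝ (Fin d) → ℝ) : ℝ≥0∞ :=
  (∫⁻ x in Q, ENNReal.ofReal (w x)) / volume Q

/-- The Muckenhoupt `A_p` characteristic `[w]_{A_p}`, with `p' = p/(p-1)`. -/
noncomputable def ApConst (d : ℕ) (p : ℝ) (w : EuclideanSpace ℝ (Fin d) → ℝ) : ℝ≥0∞ :=
  ⨆ Q : {Q : Set (EuclideanSpace ℝ (Fin d)) // IsCube Q},
    cubeAvg Q.1 w * (cubeAvg Q.1 (fun x => w x ^ (1 - p / (p - 1)))) ^ (p - 1)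

/-- A weight on `ℝ^d`: a locally integrable, everywhere positive function. -/
def IsWeight {d : ℕ} (w : EuclideanSpace ℝ (Fin d) → ℝ) : Prop :=
  (∀ x, 0 < w x) ∧ LocallyIntegrable w volume

/-- The (uncentered, over cubes) Hardy–Littlewood maximal operator. -/
noncomputable def maximalOp {d : ℕ} (f : EuclideanSpace ℝ (Fin d) → ℂ)
    (x : EuclideanSpace ℝ (Fin d)) : ℝ≥0∞ :=
  ⨆ Q : {Q : Set (EuclideanSpace ℝ (Fin d)) // IsCube Q ∧ x ∈ Q},
    (∫⁻ y in Q.1, ‖f y‖₊) / volume Q.1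

/-- The class `𝒦` of integrable kernels `k` with `|k| * |f| ≤ M f` a.e. for
all simple `f : ℝ^d → ℂ`. -/
def MemK {d : ℕ} (k : EuclideanSpace ℝ (Fin d) → ℝ) : Prop :=
  Integrable k ∧ ∀ f : SimpleFunc (EuclideanSpace ℝ (Fin d)) ℂ,
    ∀ᵐ x, (∫⁻ y, ENNReal.ofReal |k (x - y)| * ‖f y‖₊) ≤ maximalOp (⇑f) x

/-- If `k ∈ 𝒦` then `‖k‖_{L¹(ℝ^d)} ≤ 1`. -/
theorem memK_norm_le_one (d : ℕ) (k : EuclideanSpace ℝ (Fin d) → ℝ)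
    (hk : MemK k) : ∫⁻ x, ‖k x‖₊ ≤ 1 := by
  obtain ⟨hint, hae⟩ := hk
  set g : EuclideanSpace ℝ (Fin d) → ℝ≥0∞ := fun z => ENNReal.ofReal |k z| with hg
  have hgk : (∫⁻ x, (‖k x‖₊ : ℝ≥0∞)) = ∫⁻ x, g x := by
    refine lintegral_congr fun x => ?_
    rw [hg, ← enorm_eq_nnnorm, ← ofReal_norm, Real.norm_eq_abs]
  set Q : ℕ → Set (EuclideanSpace ℝ (Fin d)) :=
    fun n => {y | ∀ i, y i ∈ Set.Icc (-((n:ℝ)+1)) ((n:ℝ)+1)} with hQ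
  have hQm : ∀ n, MeasurableSet (Q n) := by
    intro n
    have : Q n = ⋂ i, (fun y : EuclideanSpace ℝ (Fin d) => y i) ⁻¹'
        Set.Icc (-((n:ℝ)+1)) ((n:ℝ)+1) := by
      ext y; simp [hQ]
    rw [this]
    exact MeasurableSet.iInter fun i =>
      ((measurable_pi_apply i).comp (WithLp.measurable_ofLp 2 _)) measurableSet_Icc
  set f : ℕ → SimpleFunc (EuclideanSpace ℝ (Fin d)) ℂ := fun n =>
    SimpleFunc.piecewise (Q n) (hQm n) (SimpleFunc.const _ (1:ℂ))
      (SimpleFunc.const _ (0:ℂ)) with hf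
  have hM : ∀ n x, maximalOp (⇑(f n)) x ≤ 1 := by
    intro n x
    refine iSup_le fun Q' => ?_
    refine ENNReal.div_le_of_le_mul ?_
    rw [one_mul]
    calc (∫⁻ y in Q'.1, (‖f n y‖₊ : ℝ≥0∞)) ≤ ∫⁻ y in Q'.1, 1 := by
          refine lintegral_mono fun y => ?_
          by_cases h : y ∈ Q n <;>
            simp [hf, SimpleFunc.coe_piecewise, Set.piecewise, h]
      _ = volume Q'.1 := setLIntegral_one _
  have hLHS : ∀ n x, (∫⁻ y, ENNReal.ofReal |k (x - y)| * ‖f n y‖₊)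
      = ∫⁻ y in Q n, g (x - y) := by
    intro n x
    rw [← lintegral_indicator (hQm n)]
    refine lintegral_congr fun y => ?_
    by_cases h : y ∈ Q n
    · simp [hf, Set.piecewise, h, Set.indicator_of_mem h, hg]
    · simp [hf, Set.piecewise, h, Set.indicator_of_notMem h]
  have hA : ∀ᵐ x, ∀ n, (∫⁻ y in Q n, g (x - y)) ≤ 1 := by
    rw [ae_all_iff]
    intro n
    filter_upwards [hae (f n)] with x hx
    calc (∫⁻ y in Q n, g (x - y)) = _ := (hLHS n x).symm
      _ ≤ maximalOp (⇑(f n)) x := hx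
      _ ≤ 1 := hM n x
  have hne : (ae (volume : Measure (EuclideanSpace ℝ (Fin d)))).NeBot := by
    refine MeasureTheory.ae_neBot.mpr ?_
    intro h
    have := isOpen_univ.measure_pos (volume : Measure (EuclideanSpace ℝ (Fin d)))
      Set.univ_nonempty
    simp [h] at this
  obtain ⟨x, hx⟩ := hA.exists
  set φ : EuclideanSpace ℝ (Fin d) → EuclideanSpace ℝ (Fin d) := fun z => x - z with hφ
  have hφm : MeasurePreserving φ volume volume := Measure.measurePreserving_sub_left volume x
  have hφe : MeasurableEmbedding φ :=
    (Homeomorph.subLeft x).toMeasurableEquiv.measurableEmbedding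
  set s : ℕ → Set (EuclideanSpace ℝ (Fin d)) := fun n => φ ⁻¹' Q n with hs
  have hsm : ∀ n, MeasurableSet (s n) := fun n => hφm.measurable (hQm n)
  have key : ∀ n, (∫⁻ z in s n, g z) ≤ 1 := by
    intro n
    have h2 := hφm.setLIntegral_comp_preimage_emb hφe g (s n)
    have hQs : φ ⁻¹' s n = Q n := by
      ext y; simp [hs, hφ, _root_.sub_sub_cancel]
    rw [hQs] at h2
    rw [← h2]
    exact hx n
  have hmono : Monotone s := by
    intro m n hmn z hz i
    obtain ⟨h1, h2⟩ := hz i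
    constructor
    · have : ((m:ℝ)+1) ≤ ((n:ℝ)+1) := by
        have := (Nat.cast_le (α := ℝ)).mpr hmn; linarith
      linarith
    · have : ((m:ℝ)+1) ≤ ((n:ℝ)+1) := by
        have := (Nat.cast_le (α := ℝ)).mpr hmn; linarith
      linarith
  have hcup : (⋃ n, s n) = Set.univ := by
    ext z
    simp only [Set.mem_iUnion, Set.mem_univ, iff_true]
    refine ⟨⌈∑ i, |(x - z) i|⌉₊, fun i => ?_⟩
    have hb : |(x - z) i| ≤ ∑ j, |(x - z) j| :=
      Finset.single_le_sum (f := fun j => |(x - z) j|)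
        (fun j _ => abs_nonneg _) (Finset.mem_univ i)
    have hc : (∑ j, |(x - z) j|) ≤ (⌈∑ j, |(x - z) j|⌉₊ : ℝ) + 1 := by
      have := Nat.le_ceil (∑ j, |(x - z) j|)
      linarith
    have habs : |(x - z) i| ≤ (⌈∑ j, |(x - z) j|⌉₊ : ℝ) + 1 := le_trans hb hc
    obtain ⟨ha, hb'⟩ := abs_le.mp habs
    exact ⟨ha, hb'⟩
  rw [hgk]
  have hwd : (∫⁻ z, g z) = (volume.withDensity g) Set.univ := by
    rw [withDensity_apply _ MeasurableSet.univ, Measure.restrict_univ]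
  rw [hwd, ← hcup, hmono.measure_iUnion]
  refine iSup_le fun n => ?_
  rw [withDensity_apply _ (hsm n)]
  exact key n
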